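/- Let G be a finite connected graph, let {F_1, …, F_k} be a partition of E(G) that is coarser than the Θ*-partition (i.e. each F_j is a union of Θ*-classes of G). Then for any two vertices x, y ∈ V(G) it holds that d_G(x,y) = Σ_{j=1}^{k} d_{G/F_j}(ℓ_j(x), ℓ_j(y)). -/

import Mathlib

open SimpleGraph

variable {V : Type*}

/-- The Djoković–Winkler relation Θ on edges of `G`:
`e₁ = u₁v₁` and `e₂ = u₂v₂` are in relation Θ if
`d(u₁,u₂) + d(v₁,v₂) ≠ d(u₁,v₂) + d(v₁,u₂)`. -/
def djokovicWinkler (G : SimpleGraph V) (e₁ e₂ : Sym2 V) : Prop :=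
  e₁ ∈ G.edgeSet ∧ e₂ ∈ G.edgeSet ∧
    ∃ u₁ v₁ u₂ v₂, e₁ = s(u₁, v₁) ∧ e₂ = s(u₂, v₂) ∧
      G.dist u₁ u₂ + G.dist v₁ v₂ ≠ G.dist u₁ v₂ + G.dist v₁ u₂

/-- Θ*, the transitive closure of the relation Θ. -/
def thetaStar (G : SimpleGraph V) : Sym2 V → Sym2 V → Prop :=
  Relation.TransGen (djokovicWinkler G)

/-- The quotient graph `G / F`: its vertices are the connected components of `G - F`,
two components being adjacent if some vertex of one is adjacent in `G` to some
vertex of the other. -/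
def quotientGraph (G : SimpleGraph V) (F : Set (Sym2 V)) :
    SimpleGraph (G.deleteEdges F).ConnectedComponent where
  Adj C D := C ≠ D ∧ ∃ x y : V, G.Adj x y ∧
    (G.deleteEdges F).connectedComponentMk x = C ∧
    (G.deleteEdges F).connectedComponentMk y = D
  symm := by
    constructor
    rintro C D ⟨hne, x, y, hadj, hx, hy⟩
    exact ⟨hne.symm, y, x, hadj.symm, hy, hx⟩
  loopless := by constructor; rintro C ⟨hne, -⟩; exact hne rfl

section Aux

open scoped Classical

variable (G : SimpleGraph V)

/-- F-darts of a walk, as ordered pairs. -/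
noncomputable def fdarts (F : Set (Sym2 V)) : ∀ {x y : V}, G.Walk x y → List (V × V)
  | _, _, SimpleGraph.Walk.nil => []
  | x, _, SimpleGraph.Walk.cons (v := c) _ p =>
      if s(x, c) ∈ F then (x, c) :: fdarts F p else fdarts F p

@[simp] lemma fdarts_nil (F : Set (Sym2 V)) (x : V) :
    fdarts G F (SimpleGraph.Walk.nil : G.Walk x x) = [] := rfl

lemma fdarts_cons (F : Set (Sym2 V)) {x c y : V} (h : G.Adj x c) (p : G.Walk c y) :
    fdarts G F (SimpleGraph.Walk.cons h p) =
      if s(x, c) ∈ F then (x, c) :: fdarts G F p else fdarts G F p := rfl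

lemma mem_fdarts (F : Set (Sym2 V)) :
    ∀ {x y : V} (W : G.Walk x y) (p : V × V), p ∈ fdarts G F W →
      s(p.1, p.2) ∈ F ∧ ∃ d : G.Dart, d ∈ W.darts ∧ d.toProd = p := by
  intro x y W
  induction W with
  | nil => intro p hp; simp at hp
  | cons h q ih =>
    rename_i u v w
    intro p hp
    rw [fdarts_cons] at hp
    by_cases hF : s(u, v) ∈ F
    · rw [if_pos hF] at hp
      rcases List.mem_cons.mp hp with h1 | h2
      · subst h1
        exact ⟨hF, ⟨⟨_, h⟩, by simp [SimpleGraph.Walk.darts_cons], rfl⟩⟩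
      · obtain ⟨hmem, d, hd, hdp⟩ := ih p h2
        exact ⟨hmem, d, by simp [SimpleGraph.Walk.darts_cons, hd], hdp⟩
    · rw [if_neg hF] at hp
      obtain ⟨hmem, d, hd, hdp⟩ := ih p hp
      exact ⟨hmem, d, by simp [SimpleGraph.Walk.darts_cons, hd], hdp⟩

end Aux
section Aux2

open scoped Classical

variable (G : SimpleGraph V)

/-- The quantity `d(u,a) + d(v,b) - d(u,b) - d(v,a)` as an integer. -/
noncomputable def Dz (u v a b : V) : ℤ :=
  (G.dist u a : ℤ) + (G.dist v b : ℤ) - (G.dist u b : ℤ) - (G.dist v a : ℤ)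

lemma Dz_symm (u v a b : V) : Dz G u v a b = Dz G a b u v := by
  unfold Dz
  rw [SimpleGraph.dist_comm (u := u) (v := a), SimpleGraph.dist_comm (u := v) (v := b),
    SimpleGraph.dist_comm (u := u) (v := b), SimpleGraph.dist_comm (u := v) (v := a)]
  ring

lemma Dz_eq_of_mem_F {F : Set (Sym2 V)}
    (hcl : ∀ e ∈ F, ∀ e', thetaStar G e e' → e' ∈ F)
    (hFE : F ⊆ G.edgeSet) {u v a b : V}
    (huv : s(u, v) ∈ F) (hab : G.Adj a b) (hnF : s(a, b) ∉ F) :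
    Dz G u v a b = 0 := by
  by_contra hne
  apply hnF
  apply hcl _ huv
  apply Relation.TransGen.single
  refine ⟨hFE huv, hab, u, v, a, b, rfl, rfl, ?_⟩
  intro heq
  apply hne
  unfold Dz
  omega

/-- Telescoping: the sum of `Dz u v` over the `F`-darts of any walk equals the
full telescoping difference, provided `s(u,v) ∈ F` and `F` is Θ*-closed. -/
lemma sum_Dz_fdarts {F : Set (Sym2 V)}
    (hcl : ∀ e ∈ F, ∀ e', thetaStar G e e' → e' ∈ F)
    (hFE : F ⊆ G.edgeSet) {u v : V} (huv : s(u, v) ∈ F) :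
    ∀ {a b : V} (W : G.Walk a b),
      ((fdarts G F W).map (fun p => Dz G u v p.1 p.2)).sum =
        ((G.dist u a : ℤ) - (G.dist v a : ℤ)) - ((G.dist u b : ℤ) - (G.dist v b : ℤ)) := by
  intro a b W
  induction W with
  | nil => simp
  | cons h q ih =>
    rename_i p r s
    rw [fdarts_cons]
    by_cases hF : s(p, r) ∈ F
    · rw [if_pos hF]
      simp only [List.map_cons, List.sum_cons, ih]
      unfold Dz
      ring
    · rw [if_neg hF]
      rw [ih]
      have h0 : Dz G u v p r = 0 := Dz_eq_of_mem_F G hcl hFE huv h hF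
      unfold Dz at h0
      omega

/-- Exchange of a double list sum. -/
lemma list_sum_exchange {α β : Type*} (g : α → β → ℤ) :
    ∀ (L₁ : List α) (L₂ : List β),
      (L₁.map (fun a => (L₂.map (fun b => g a b)).sum)).sum =
        (L₂.map (fun b => (L₁.map (fun a => g a b)).sum)).sum := by
  intro L₁
  induction L₁ with
  | nil => intro L₂; induction L₂ <;> simp_all
  | cons a L₁ ih =>
    intro L₂
    simp only [List.map_cons, List.sum_cons, ih]
    clear ih
    induction L₂ with
    | nil => simp
    | cons b L₂ ih2 => simp only [List.map_cons, List.sum_cons]; omega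

end Aux2
section Aux3

variable (G : SimpleGraph V)

lemma geodesic_tail_dist (hG : G.Connected) {x c y : V} (h : G.Adj x c) (p : G.Walk c y)
    (hP : p.length + 1 = G.dist x y) :
    G.dist c y = p.length := by
  have h1 : G.dist c y ≤ p.length := SimpleGraph.dist_le p
  have h2 : G.dist x y ≤ G.dist x c + G.dist c y := hG.dist_triangle
  have h3 : G.dist x c = 1 := SimpleGraph.dist_eq_one_iff_adj.mpr h
  omega

/-- Along a geodesic, distances to the endpoint `y` decrease by one across each dart. -/
lemma geodesic_dart_right (hG : G.Connected) :
    ∀ {x y : V} (P : G.Walk x y), P.length = G.dist x y →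
      ∀ d : G.Dart, d ∈ P.darts → G.dist d.fst y = G.dist d.snd y + 1 := by
  intro x y P
  induction P with
  | nil => intro _ d hd; simp at hd
  | cons h q ih =>
    rename_i a b c
    intro hlen d hd
    rw [SimpleGraph.Walk.length_cons] at hlen
    have hq : G.dist b c = q.length := geodesic_tail_dist G hG h q hlen
    rw [SimpleGraph.Walk.darts_cons] at hd
    rcases List.mem_cons.mp hd with h1 | h2
    · subst h1
      show G.dist a c = G.dist b c + 1
      omega
    · exact ih hq.symm d h2

/-- Along a geodesic, distances from the start `x` increase by one across each dart. -/
lemma geodesic_dart_left (hG : G.Connected) {x y : V} (P : G.Walk x y)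
    (hP : P.length = G.dist x y) (d : G.Dart) (hd : d ∈ P.darts) :
    G.dist x d.snd = G.dist x d.fst + 1 := by
  have hrev : P.reverse.length = G.dist y x := by
    rw [SimpleGraph.Walk.length_reverse, hP, SimpleGraph.dist_comm]
  have hd' : d.symm ∈ P.reverse.darts := by
    rw [SimpleGraph.Walk.darts_reverse, List.mem_reverse, List.mem_map]
    exact ⟨d, hd, rfl⟩
  have h2 := geodesic_dart_right G hG P.reverse hrev d.symm hd'
  have h3 : G.dist d.snd x = G.dist d.fst x + 1 := h2
  rw [SimpleGraph.dist_comm (u := x) (v := d.snd),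
    SimpleGraph.dist_comm (u := x) (v := d.fst)]
  exact h3

end Aux3
section Aux4

variable (G : SimpleGraph V)

lemma list_sum_map_const_of {α : Type*} (f : α → ℤ) (c : ℤ) :
    ∀ (L : List α), (∀ a ∈ L, f a = c) → (L.map f).sum = c * L.length := by
  intro L
  induction L with
  | nil => simp
  | cons a L ih =>
    intro h
    simp only [List.map_cons, List.sum_cons, List.length_cons]
    rw [h a List.mem_cons_self, ih (fun b hb => h b (List.mem_cons_of_mem a hb))]
    push_cast
    ring

lemma list_sum_map_le_of {α : Type*} (f : α → ℤ) (c : ℤ) :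
    ∀ (L : List α), (∀ a ∈ L, c ≤ f a) → c * L.length ≤ (L.map f).sum := by
  intro L
  induction L with
  | nil => simp
  | cons a L ih =>
    intro h
    simp only [List.map_cons, List.sum_cons, List.length_cons]
    have h1 := h a List.mem_cons_self
    have h2 := ih (fun b hb => h b (List.mem_cons_of_mem a hb))
    push_cast
    push_cast at h2
    nlinarith

set_option maxHeartbeats 1000000 in
/-- **Key counting lemma**: a geodesic crosses a Θ*-closed edge set at most as
often as any other walk with the same endpoints. -/
lemma geodesic_fdarts_le (hG : G.Connected) {F : Set (Sym2 V)}
    (hcl : ∀ e ∈ F, ∀ e', thetaStar G e e' → e' ∈ F)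
    (hFE : F ⊆ G.edgeSet) {x y : V} (P W : G.Walk x y)
    (hP : P.length = G.dist x y) :
    (fdarts G F P).length ≤ (fdarts G F W).length := by
  classical
  have hrow : ∀ e ∈ fdarts G F P,
      ((fdarts G F W).map (fun f => Dz G e.1 e.2 f.1 f.2)).sum = -2 := by
    intro e he
    obtain ⟨heF, d, hd, hdp⟩ := mem_fdarts G F P e he
    have h1 : G.dist d.fst y = G.dist d.snd y + 1 := geodesic_dart_right G hG P hP d hd
    have h2 : G.dist x d.snd = G.dist x d.fst + 1 := geodesic_dart_left G hG P hP d hd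
    have e1 : e.1 = d.fst := by rw [← hdp]
    have e2 : e.2 = d.snd := by rw [← hdp]
    rw [sum_Dz_fdarts G hcl hFE heF W]
    rw [e1, e2]
    rw [SimpleGraph.dist_comm (u := d.fst) (v := x), SimpleGraph.dist_comm (u := d.snd) (v := x)]
    omega
  have hAval : ((fdarts G F P).map
      (fun e => ((fdarts G F W).map (fun f => Dz G e.1 e.2 f.1 f.2)).sum)).sum
      = -2 * (fdarts G F P).length := by
    apply list_sum_map_const_of _ _ _ hrow
  have hswap : ((fdarts G F P).map
      (fun e => ((fdarts G F W).map (fun f => Dz G e.1 e.2 f.1 f.2)).sum)).sum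
      = ((fdarts G F W).map
      (fun f => ((fdarts G F P).map (fun e => Dz G e.1 e.2 f.1 f.2)).sum)).sum := by
    apply list_sum_exchange
  have hcol : ∀ f ∈ fdarts G F W,
      -2 ≤ ((fdarts G F P).map (fun e => Dz G e.1 e.2 f.1 f.2)).sum := by
    intro f hf
    obtain ⟨hfF, d, hd, hdp⟩ := mem_fdarts G F W f hf
    have hmapeq : ((fdarts G F P).map (fun e => Dz G e.1 e.2 f.1 f.2)).sum
        = ((fdarts G F P).map (fun e => Dz G f.1 f.2 e.1 e.2)).sum := by
      congr 1
      exact List.map_congr_left (fun e _ => Dz_symm G e.1 e.2 f.1 f.2)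
    rw [hmapeq, sum_Dz_fdarts G hcl hFE hfF P]
    have hadj : G.Adj f.1 f.2 := by
      have hda := d.adj
      rw [hdp] at hda
      exact hda
    have hd1 : G.dist f.1 f.2 = 1 := SimpleGraph.dist_eq_one_iff_adj.mpr hadj
    have t1 : G.dist f.1 x ≤ G.dist f.1 f.2 + G.dist f.2 x := hG.dist_triangle
    have t3 : G.dist f.2 x ≤ G.dist f.2 f.1 + G.dist f.1 x := hG.dist_triangle
    have t4 : G.dist f.2 y ≤ G.dist f.2 f.1 + G.dist f.1 y := hG.dist_triangle
    have t2 : G.dist f.1 y ≤ G.dist f.1 f.2 + G.dist f.2 y := hG.dist_triangle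
    have hd2 : G.dist f.2 f.1 = 1 := by rw [SimpleGraph.dist_comm]; exact hd1
    omega
  have hAge : -2 * ((fdarts G F W).length : ℤ)
      ≤ ((fdarts G F W).map
      (fun f => ((fdarts G F P).map (fun e => Dz G e.1 e.2 f.1 f.2)).sum)).sum := by
    apply list_sum_map_le_of _ _ _ hcol
  rw [← hswap, hAval] at hAge
  omega

end Aux4
section Aux5

variable (G : SimpleGraph V) (F : Set (Sym2 V))

/-- Projecting a walk to the quotient graph. -/
lemma quot_walk_exists :
    ∀ {x y : V} (W : G.Walk x y),
      ∃ q : (quotientGraph G F).Walk ((G.deleteEdges F).connectedComponentMk x)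
        ((G.deleteEdges F).connectedComponentMk y), q.length ≤ (fdarts G F W).length := by
  intro x y W
  induction W with
  | nil => exact ⟨SimpleGraph.Walk.nil, by simp⟩
  | cons h p ih =>
    rename_i a b c
    obtain ⟨q, hq⟩ := ih
    by_cases hmem : s(a, b) ∈ F
    · by_cases heq : (G.deleteEdges F).connectedComponentMk a
          = (G.deleteEdges F).connectedComponentMk b
      · rw [heq]
        refine ⟨q, ?_⟩
        rw [fdarts_cons, if_pos hmem]
        simp only [List.length_cons]
        omega
      · have hadj : (quotientGraph G F).Adj ((G.deleteEdges F).connectedComponentMk a)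
            ((G.deleteEdges F).connectedComponentMk b) := ⟨heq, a, b, h, rfl, rfl⟩
        refine ⟨SimpleGraph.Walk.cons hadj q, ?_⟩
        rw [fdarts_cons, if_pos hmem]
        simp only [SimpleGraph.Walk.length_cons, List.length_cons]
        omega
    · have heq : (G.deleteEdges F).connectedComponentMk a
          = (G.deleteEdges F).connectedComponentMk b :=
        SimpleGraph.ConnectedComponent.sound
          ((SimpleGraph.deleteEdges_adj.mpr ⟨h, hmem⟩).reachable)
      rw [heq]
      refine ⟨q, ?_⟩
      rw [fdarts_cons, if_neg hmem]
      exact hq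

lemma quot_dist_le {x y : V} (W : G.Walk x y) :
    (quotientGraph G F).dist ((G.deleteEdges F).connectedComponentMk x)
      ((G.deleteEdges F).connectedComponentMk y) ≤ (fdarts G F W).length := by
  obtain ⟨q, hq⟩ := quot_walk_exists G F W
  exact le_trans (SimpleGraph.dist_le q) hq

/-- A walk in `G - F` gives a walk in `G` with no `F`-darts. -/
lemma zero_fdarts_walk :
    ∀ {x y : V} (W' : (G.deleteEdges F).Walk x y), ∃ W : G.Walk x y, fdarts G F W = [] := by
  intro x y W'
  induction W' with
  | nil => exact ⟨SimpleGraph.Walk.nil, rfl⟩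
  | cons h p ih =>
    rename_i a b c
    obtain ⟨W, hW⟩ := ih
    rw [SimpleGraph.deleteEdges_adj] at h
    refine ⟨SimpleGraph.Walk.cons h.1 W, ?_⟩
    rw [fdarts_cons, if_neg h.2]
    exact hW

lemma fdarts_append :
    ∀ {x y z : V} (W₁ : G.Walk x y) (W₂ : G.Walk y z),
      fdarts G F (W₁.append W₂) = fdarts G F W₁ ++ fdarts G F W₂ := by
  intro x y z W₁
  induction W₁ with
  | nil => intro W₂; simp
  | cons h p ih =>
    rename_i a b c
    intro W₂
    rw [SimpleGraph.Walk.cons_append, fdarts_cons, fdarts_cons]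
    by_cases hmem : s(a, b) ∈ F
    · rw [if_pos hmem, if_pos hmem, ih]
      simp
    · rw [if_neg hmem, if_neg hmem, ih]

/-- Lifting a walk of the quotient graph back to `G`. -/
lemma lift_quot_walk :
    ∀ {C D : (G.deleteEdges F).ConnectedComponent}
      (q : (quotientGraph G F).Walk C D) (x y : V),
      (G.deleteEdges F).connectedComponentMk x = C →
      (G.deleteEdges F).connectedComponentMk y = D →
      ∃ W : G.Walk x y, (fdarts G F W).length ≤ q.length := by
  intro C D q
  induction q with
  | nil =>
    intro x y hx hy
    have hr : (G.deleteEdges F).Reachable x y :=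
      SimpleGraph.ConnectedComponent.exact (hx.trans hy.symm)
    obtain ⟨W'⟩ := hr
    obtain ⟨W, hW⟩ := zero_fdarts_walk G F W'
    exact ⟨W, by rw [hW]; simp⟩
  | cons hadj q ih =>
    intro x y hx hy
    have hlen := SimpleGraph.Walk.length_cons hadj q
    obtain ⟨hne, a, b, hab, ha, hb⟩ := hadj
    have hr : (G.deleteEdges F).Reachable x a :=
      SimpleGraph.ConnectedComponent.exact (hx.trans ha.symm)
    obtain ⟨W₁'⟩ := hr
    obtain ⟨W₁, hW₁⟩ := zero_fdarts_walk G F W₁'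
    obtain ⟨W₂, hW₂⟩ := ih b y hb hy
    refine ⟨W₁.append (SimpleGraph.Walk.cons hab W₂), ?_⟩
    rw [fdarts_append, hW₁, fdarts_cons]
    simp only [List.nil_append, SimpleGraph.Walk.length_cons]
    by_cases hmem : s(a, b) ∈ F
    · rw [if_pos hmem]; simp only [List.length_cons]; omega
    · rw [if_neg hmem]; omega

lemma exists_walk_fdarts_le_quot_dist (hG : G.Connected) (x y : V) :
    ∃ W : G.Walk x y, (fdarts G F W).length ≤
      (quotientGraph G F).dist ((G.deleteEdges F).connectedComponentMk x)
        ((G.deleteEdges F).connectedComponentMk y) := by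
  obtain ⟨W₀⟩ := hG.preconnected x y
  obtain ⟨q₀, _⟩ := quot_walk_exists G F W₀
  have hreach : (quotientGraph G F).Reachable
      ((G.deleteEdges F).connectedComponentMk x)
      ((G.deleteEdges F).connectedComponentMk y) := ⟨q₀⟩
  obtain ⟨q, hq⟩ := hreach.exists_walk_length_eq_dist
  obtain ⟨W, hW⟩ := lift_quot_walk G F q x y rfl rfl
  exact ⟨W, by rw [← hq]; exact hW⟩

end Aux5
section Main

open scoped Classical

variable (G : SimpleGraph V)

lemma sum_fdarts_length {k : ℕ} (F : Fin k → Set (Sym2 V))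
    (hdisj : ∀ j j', j ≠ j' → Disjoint (F j) (F j'))
    (hcover : ⋃ j, F j = G.edgeSet) :
    ∀ {x y : V} (W : G.Walk x y), ∑ j : Fin k, (fdarts G (F j) W).length = W.length := by
  intro x y W
  induction W with
  | nil => simp
  | cons h p ih =>
    rename_i a b c
    have hstep : ∑ j : Fin k, (if s(a, b) ∈ F j then 1 else 0) = 1 := by
      have hmem : s(a, b) ∈ ⋃ j, F j := by
        rw [hcover]; exact h
      obtain ⟨j₀, hj₀⟩ := Set.mem_iUnion.mp hmem
      rw [Finset.sum_eq_single j₀]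
      · rw [if_pos hj₀]
      · intro j _ hjne
        rw [if_neg]
        exact fun hmem' => (Set.disjoint_left.mp (hdisj j j₀ hjne)) hmem' hj₀
      · intro habs; exact absurd (Finset.mem_univ j₀) habs
    calc ∑ j : Fin k, (fdarts G (F j) (SimpleGraph.Walk.cons h p)).length
        = ∑ j : Fin k, ((if s(a, b) ∈ F j then 1 else 0) + (fdarts G (F j) p).length) := by
          apply Finset.sum_congr rfl
          intro j _
          rw [fdarts_cons]
          by_cases hmem : s(a, b) ∈ F j
          · rw [if_pos hmem, if_pos hmem]; simp [Nat.add_comm]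
          · rw [if_neg hmem, if_neg hmem]; simp
      _ = (∑ j : Fin k, (if s(a, b) ∈ F j then 1 else 0))
            + ∑ j : Fin k, (fdarts G (F j) p).length := Finset.sum_add_distrib
      _ = 1 + p.length := by rw [hstep, ih]
      _ = (SimpleGraph.Walk.cons h p).length := by
          rw [SimpleGraph.Walk.length_cons]; omega

end Main
/-- If `G` is a finite connected graph and `{F 0, …, F (k-1)}` is a
partition of `E(G)` coarser than the Θ*-partition (each part is nonempty, the parts are
pairwise disjoint, they cover `E(G)`, and each part is closed under Θ*, i.e. is a union
of Θ*-classes), then for all vertices `x y`,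
`d_G(x,y) = ∑_j d_{G/F_j}(ℓ_j x, ℓ_j y)`, where `ℓ_j x` is the connected component
of `G - F j` containing `x`. -/
theorem dist_eq_sum_quotient_dist [Fintype V] (G : SimpleGraph V) (hG : G.Connected)
    (k : ℕ) (F : Fin k → Set (Sym2 V))
    (hne : ∀ j, (F j).Nonempty)
    (hdisj : ∀ j j', j ≠ j' → Disjoint (F j) (F j'))
    (hcover : ⋃ j, F j = G.edgeSet)
    (hcoarse : ∀ j, ∀ e ∈ F j, ∀ e', thetaStar G e e' → e' ∈ F j)
    (x y : V) :
    G.dist x y = ∑ j : Fin k, (quotientGraph G (F j)).dist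
      ((G.deleteEdges (F j)).connectedComponentMk x)
      ((G.deleteEdges (F j)).connectedComponentMk y) := by
  have hFE : ∀ j, F j ⊆ G.edgeSet := fun j => hcover ▸ Set.subset_iUnion F j
  obtain ⟨P, hP⟩ := (hG.preconnected x y).exists_walk_length_eq_dist
  apply le_antisymm
  · rw [← hP, ← sum_fdarts_length G F hdisj hcover P]
    apply Finset.sum_le_sum
    intro j _
    obtain ⟨W, hW⟩ := exists_walk_fdarts_le_quot_dist G (F j) hG x y
    exact le_trans (geodesic_fdarts_le G hG (hcoarse j) (hFE j) P W hP) hW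
  · refine le_trans (Finset.sum_le_sum fun j _ => quot_dist_le G (F j) P) ?_
    rw [sum_fdarts_length G F hdisj hcover P, hP]
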